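/- For all integers p ≥ 4, n ≥ 1 and d ≥ 2, the inequality p·(n+1)·(C(d+n, n) − n − 1) ≤ (d^p − d^{⌊p/2⌋})·(d^p − 1)^{n−1} holds. -/

import Mathlib

private lemma aux_2p (q : ℕ) : 2 * (q + 4) ≤ 3 * 2 ^ (q + 2) := by
  induction q with
  | zero => norm_num
  | succ k ih =>
    have h1 : 3 * 2 ^ (k + 1 + 2) = 2 * (3 * 2 ^ (k + 2)) := by ring
    have h2 : (0:ℕ) < 3 * 2 ^ (k + 2) := by positivity
    omega

private lemma aux_p (q : ℕ) : q + 4 ≤ 2 ^ (q + 2) := by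
  induction q with
  | zero => norm_num
  | succ k ih =>
    have h1 : 2 ^ (k + 1 + 2) = 2 * 2 ^ (k + 2) := by ring
    omega

private lemma aux_fac (d : ℕ) (hd : 2 ≤ d) : (d + 1) * (d - 1) = d ^ 2 - 1 := by
  obtain ⟨e, rfl⟩ := Nat.exists_eq_add_of_le hd
  rw [show 2 + e - 1 = 1 + e by omega]
  ring_nf
  omega

private lemma aux_choose (d : ℕ) (hd : 2 ≤ d) :
    ∀ m : ℕ, (d + (m + 1)).choose (m + 1) ≤ (d + 1) * d ^ m := by
  intro m
  induction m with
  | zero => simp [Nat.choose_one_right]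
  | succ k ih =>
    have key : (d + (k + 2)).choose (k + 2) * (k + 2)
        = (d + (k + 2)) * (d + (k + 1)).choose (k + 1) := by
      have h := Nat.add_one_mul_choose_eq (d + (k + 1)) (k + 1)
      rw [show d + (k + 1) + 1 = d + (k + 2) by ring, show k + 1 + 1 = k + 2 by ring] at h
      exact h.symm
    have h1 : (d + (k + 2)).choose (k + 2) * (k + 2)
        ≤ (d + (k + 2)) * ((d + 1) * d ^ k) := by
      rw [key]
      exact Nat.mul_le_mul_left _ ih
    have h2 : (d + (k + 2)) * ((d + 1) * d ^ k)
        ≤ ((d + 1) * d ^ (k + 1)) * (k + 2) := by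
      have hpk : 1 ≤ d ^ k := Nat.one_le_pow _ _ (by omega)
      have hkey : d + (k + 2) ≤ (k + 2) * d := by nlinarith
      calc (d + (k + 2)) * ((d + 1) * d ^ k)
          ≤ ((k + 2) * d) * ((d + 1) * d ^ k) := Nat.mul_le_mul_right _ hkey
        _ = ((d + 1) * d ^ (k + 1)) * (k + 2) := by ring
    exact Nat.le_of_mul_le_mul_right (le_trans h1 h2) (by omega : 0 < k + 2)

private lemma aux_rhs (q m d : ℕ) (hd : 2 ≤ d) :
    d ^ (q + 2) * (d ^ 2 - 1) * d ^ ((q + 3) * m)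
      ≤ (d ^ (q + 4) - d ^ ((q + 4) / 2)) * (d ^ (q + 4) - 1) ^ m := by
  have hd0 : 0 < d := by omega
  have hA : d ^ (q + 2) * (d ^ 2 - 1) ≤ d ^ (q + 4) - d ^ ((q + 4) / 2) := by
    have h1 : d ^ ((q + 4) / 2) ≤ d ^ (q + 2) :=
      Nat.pow_le_pow_right hd0 (by omega)
    have h2 : d ^ (q + 2) * (d ^ 2 - 1) + d ^ (q + 2) = d ^ (q + 4) := by
      have h3 : (1:ℕ) ≤ d ^ 2 := Nat.one_le_pow _ _ hd0
      have h4 : d ^ (q + 2) * (d ^ 2 - 1) + d ^ (q + 2) * 1 = d ^ (q + 2) * d ^ 2 := by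
        rw [← Nat.mul_add]
        congr 1
        omega
      rw [Nat.mul_one] at h4
      rw [h4, ← pow_add]
    omega
  have hB : d ^ ((q + 3) * m) ≤ (d ^ (q + 4) - 1) ^ m := by
    have h1 : d ^ (q + 3) ≤ d ^ (q + 4) - 1 := by
      have h2 : d ^ (q + 4) = d * d ^ (q + 3) := by rw [← pow_succ']
      have h3 : 1 ≤ d ^ (q + 3) := Nat.one_le_pow _ _ hd0
      have h4 : 2 * d ^ (q + 3) ≤ d * d ^ (q + 3) := Nat.mul_le_mul_right _ hd
      omega
    calc d ^ ((q + 3) * m) = (d ^ (q + 3)) ^ m := by rw [pow_mul]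
      _ ≤ (d ^ (q + 4) - 1) ^ m := Nat.pow_le_pow_left h1 m
  exact Nat.mul_le_mul hA hB

theorem stmt5 (p n d : ℕ) (hp : 4 ≤ p) (hn : 1 ≤ n) (hd : 2 ≤ d) :
    p * (n + 1) * (Nat.choose (d + n) n - n - 1) ≤
      (d ^ p - d ^ (p / 2)) * (d ^ p - 1) ^ (n - 1) := by
  obtain ⟨q, rfl⟩ : ∃ q, p = q + 4 := ⟨p - 4, by omega⟩
  have hd0 : 0 < d := by omega
  match n, hn with
  | 1, _ =>
    have hc : (d + 1).choose 1 = d + 1 := Nat.choose_one_right _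
    rw [hc, show (1:ℕ) - 1 = 0 from rfl, pow_zero, mul_one,
      show d + 1 - 1 - 1 = d - 1 by omega]
    calc (q + 4) * (1 + 1) * (d - 1)
        = 2 * (q + 4) * (d - 1) := by ring
      _ ≤ 3 * 2 ^ (q + 2) * (d - 1) := Nat.mul_le_mul_right _ (aux_2p q)
      _ ≤ (d + 1) * d ^ (q + 2) * (d - 1) :=
          Nat.mul_le_mul_right _
            (Nat.mul_le_mul (by omega) (Nat.pow_le_pow_left hd _))
      _ = d ^ (q + 2) * ((d + 1) * (d - 1)) := by ring
      _ = d ^ (q + 2) * (d ^ 2 - 1) := by rw [aux_fac d hd]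
      _ ≤ d ^ (q + 4) - d ^ ((q + 4) / 2) := by
          have h := aux_rhs q 0 d hd
          simp only [Nat.mul_zero, pow_zero, mul_one] at h
          exact h
  | (m + 2), _ =>
    have hC : (d + (m + 2)).choose (m + 2) ≤ (d + 1) * d ^ (m + 1) :=
      aux_choose d hd (m + 1)
    have hpn2 : (q + 4) * (m + 2 + 1) ≤ d ^ ((q + 2) * (m + 2)) := by
      have h1 : (q + 4) * (m + 2 + 1) ≤ 2 ^ (q + 2) * 2 ^ (m + 2) :=
        Nat.mul_le_mul (aux_p q) (by have := Nat.lt_two_pow_self (n := m + 2); omega)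
      have h2 : (2:ℕ) ^ (q + 2) * 2 ^ (m + 2) = 2 ^ ((q + 2) + (m + 2)) :=
        (pow_add 2 (q + 2) (m + 2)).symm
      have h3 : (2:ℕ) ^ ((q + 2) + (m + 2)) ≤ 2 ^ ((q + 2) * (m + 2)) :=
        Nat.pow_le_pow_right (by omega) (by nlinarith)
      have h4 : (2:ℕ) ^ ((q + 2) * (m + 2)) ≤ d ^ ((q + 2) * (m + 2)) :=
        Nat.pow_le_pow_left hd _
      omega
    rw [show m + 2 - 1 = m + 1 by omega]
    calc (q + 4) * (m + 2 + 1) * ((d + (m + 2)).choose (m + 2) - (m + 2) - 1)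
        ≤ (q + 4) * (m + 2 + 1) * ((d + 1) * d ^ (m + 1)) :=
          Nat.mul_le_mul_left _ (by omega)
      _ ≤ d ^ ((q + 2) * (m + 2)) * ((d + 1) * d ^ (m + 1)) :=
          Nat.mul_le_mul_right _ hpn2
      _ ≤ d ^ ((q + 2) * (m + 2)) * ((d + 1) * d ^ (m + 1)) * (d - 1) :=
          Nat.le_mul_of_pos_right _ (by omega)
      _ = ((d + 1) * (d - 1)) * (d ^ ((q + 2) * (m + 2)) * d ^ (m + 1)) := by ring
      _ = (d ^ 2 - 1) * d ^ ((q + 2) * (m + 2) + (m + 1)) := by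
          rw [aux_fac d hd, ← pow_add]
      _ = (d ^ 2 - 1) * (d ^ (q + 2) * d ^ ((q + 3) * (m + 1))) := by
          rw [← pow_add, show (q + 2) * (m + 2) + (m + 1) = (q + 2) + (q + 3) * (m + 1) by ring]
      _ = d ^ (q + 2) * (d ^ 2 - 1) * d ^ ((q + 3) * (m + 1)) := by ring
      _ ≤ (d ^ (q + 4) - d ^ ((q + 4) / 2)) * (d ^ (q + 4) - 1) ^ (m + 1) :=
          aux_rhs q (m + 1) d hd
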